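/- Let X be a locally compact Hausdorff topological space, let F be a nonempty compact topological space, and let N be a positive integer. Then the set C_a of asymptotically multiplication functions p : X × F → M_N(ℂ) coincides with the closure, in the supremum norm, of the set of bounded continuous functions q : X × F → M_N(ℂ) for which there exists a compact set K ⊆ X such that for every x ∉ K the function ξ ↦ q(x,ξ) is constant on F. -/

import Mathlib

set_option maxHeartbeats 1000000


/-- `M_N(ℂ)` with the operator norm, realized as the algebra of continuous linear
endomorphisms of `ℂ^N`. -/
noncomputable abbrev MatrixOp (N : ℕ) :=
  EuclideanSpace ℂ (Fin N) →L[ℂ] EuclideanSpace ℂ (Fin N)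


private lemma matrixop_norm_smul {N : ℕ} (c : ℝ) (A : MatrixOp N) :
    ‖(c : ℂ) • A‖ = |c| * ‖A‖ := by
  rw [norm_smul (β := MatrixOp N) (c : ℂ) A, Complex.norm_real, Real.norm_eq_abs]

private lemma matrixop_combo {N : ℕ} (a : ℂ) (u w : MatrixOp N) :
    u - (a • u + (1 - a) • w) = (1 - a) • (u - w) := by
  module

/-- **Density of multiplication symbols in asymptotically multiplication symbols.**
Let `X` be a locally compact Hausdorff space, `F` a nonempty compact space, `N ≥ 1`.
The set of bounded continuous functions `p : X × F → M_N(ℂ)` that are asymptotically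
multiplication (for every `ε > 0` there is a compact `K ⊆ X` with
`‖p (x,ξ₁) - p (x,ξ₂)‖ < ε` for `x ∉ K`, `ξ₁ ξ₂ ∈ F`) coincides with the closure, in
the supremum norm, of the set of bounded continuous functions that are constant in the
fiber variable `ξ` outside a compact subset of `X`. -/
theorem asymptotically_multiplication_eq_closure_mult
    (X F : Type*) [TopologicalSpace X] [LocallyCompactSpace X] [T2Space X]
    [TopologicalSpace F] [CompactSpace F] [Nonempty F]
    (N : ℕ) (hN : 0 < N) :
    { p : BoundedContinuousFunction (X × F) (MatrixOp N) |
        ∀ ε > (0 : ℝ), ∃ K : Set X, IsCompact K ∧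
          ∀ x ∉ K, ∀ ξ₁ ξ₂ : F, ‖p (x, ξ₁) - p (x, ξ₂)‖ < ε } =
      closure { q : BoundedContinuousFunction (X × F) (MatrixOp N) |
        ∃ K : Set X, IsCompact K ∧ ∀ x ∉ K, ∀ ξ₁ ξ₂ : F, q (x, ξ₁) = q (x, ξ₂) } := by
  ext p
  simp only [Set.mem_setOf_eq]
  constructor
  · intro hp
    rw [Metric.mem_closure_iff]
    intro ε hε
    obtain ⟨K, hK, hKp⟩ := hp (ε / 2) (half_pos hε)
    -- Urysohn function: 1 on K, compactly supported, values in [0,1]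
    obtain ⟨φ, hφ1, -, hφsupp, hφ01⟩ :=
      exists_continuous_one_zero_of_isCompact hK isClosed_empty (Set.disjoint_empty K)
    set ξ₀ : F := Classical.arbitrary F
    -- define q
    have cont : Continuous fun z : X × F =>
        (φ z.1 : ℂ) • p z + ((1 - φ z.1 : ℝ) : ℂ) • p (z.1, ξ₀) := by
      fun_prop
    set qf : C(X × F, MatrixOp N) := ⟨_, cont⟩ with hqf
    have hbound : ∀ z : X × F, ‖qf z‖ ≤ 2 * ‖p‖ := by
      intro z
      have h1 : ‖(φ z.1 : ℂ) • p z‖ ≤ ‖p‖ := by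
        rw [matrixop_norm_smul]
        calc |φ z.1| * ‖p z‖ ≤ 1 * ‖p z‖ := by
              apply mul_le_mul_of_nonneg_right _ (norm_nonneg _)
              rw [abs_le]
              exact ⟨le_trans (by norm_num) (hφ01 z.1).1, (hφ01 z.1).2⟩
          _ = ‖p z‖ := one_mul _
          _ ≤ ‖p‖ := p.norm_coe_le_norm z
      have h2 : ‖((1 - φ z.1 : ℝ) : ℂ) • p (z.1, ξ₀)‖ ≤ ‖p‖ := by
        rw [matrixop_norm_smul]
        calc |1 - φ z.1| * ‖p (z.1, ξ₀)‖ ≤ 1 * ‖p (z.1, ξ₀)‖ := by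
              apply mul_le_mul_of_nonneg_right _ (norm_nonneg _)
              rw [abs_le]
              constructor <;> [linarith [(hφ01 z.1).2]; linarith [(hφ01 z.1).1]]
          _ = _ := one_mul _
          _ ≤ ‖p‖ := p.norm_coe_le_norm _
      calc ‖qf z‖ ≤ ‖(φ z.1 : ℂ) • p z‖ + ‖((1 - φ z.1 : ℝ) : ℂ) • p (z.1, ξ₀)‖ := norm_add_le _ _
        _ ≤ 2 * ‖p‖ := by linarith
    set q : BoundedContinuousFunction (X × F) (MatrixOp N) :=
      BoundedContinuousFunction.ofNormedAddCommGroup qf cont (2 * ‖p‖) hbound with hq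
    refine ⟨q, ⟨tsupport φ, hφsupp, ?_⟩, ?_⟩
    · intro x hx ξ₁ ξ₂
      have hφ0 : φ x = 0 := image_eq_zero_of_notMem_tsupport hx
      show (φ x : ℂ) • p (x, ξ₁) + ((1 - φ x : ℝ) : ℂ) • p (x, ξ₀)
          = (φ x : ℂ) • p (x, ξ₂) + ((1 - φ x : ℝ) : ℂ) • p (x, ξ₀)
      simp only [hφ0, Complex.ofReal_zero, zero_smul ℂ (A := MatrixOp N)]
    · have : dist p q ≤ ε / 2 := by
        apply BoundedContinuousFunction.dist_le (le_of_lt (half_pos hε)) |>.2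
        rintro ⟨x, ξ⟩
        have : p (x, ξ) - q (x, ξ) = ((1 - φ x : ℝ) : ℂ) • (p (x, ξ) - p (x, ξ₀)) := by
          show p (x, ξ) - ((φ x : ℂ) • p (x, ξ) + ((1 - φ x : ℝ) : ℂ) • p (x, ξ₀)) = _
          push_cast
          exact matrixop_combo _ _ _
        rw [dist_eq_norm, this, matrixop_norm_smul]
        by_cases hx : x ∈ K
        · have h1x : φ x = 1 := hφ1 hx
          rw [h1x]; simp only [sub_self, abs_zero, zero_mul]; linarith
        · calc |1 - φ x| * ‖p (x, ξ) - p (x, ξ₀)‖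
              ≤ 1 * ‖p (x, ξ) - p (x, ξ₀)‖ := by
                apply mul_le_mul_of_nonneg_right _ (norm_nonneg _)
                rw [abs_le]
                constructor <;> [linarith [(hφ01 x).2]; linarith [(hφ01 x).1]]
            _ = ‖p (x, ξ) - p (x, ξ₀)‖ := one_mul _
            _ ≤ ε / 2 := le_of_lt (hKp x hx ξ ξ₀)
      linarith [half_lt_self hε]
  · intro hp ε hε
    rw [Metric.mem_closure_iff] at hp
    obtain ⟨q, ⟨K, hK, hKq⟩, hdq⟩ := hp (ε / 3) (by linarith)
    refine ⟨K, hK, fun x hx ξ₁ ξ₂ => ?_⟩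
    have h1 : ‖p (x, ξ₁) - q (x, ξ₁)‖ < ε / 3 := by
      have := BoundedContinuousFunction.dist_coe_le_dist (f := p) (g := q) (x, ξ₁)
      rw [dist_eq_norm] at this; linarith
    have h2 : ‖q (x, ξ₂) - p (x, ξ₂)‖ < ε / 3 := by
      have := BoundedContinuousFunction.dist_coe_le_dist (f := p) (g := q) (x, ξ₂)
      rw [dist_comm, dist_eq_norm] at this; linarith
    calc ‖p (x, ξ₁) - p (x, ξ₂)‖
        = ‖(p (x, ξ₁) - q (x, ξ₁)) + (q (x, ξ₁) - q (x, ξ₂)) + (q (x, ξ₂) - p (x, ξ₂))‖ := by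
          congr 1; abel
      _ ≤ ‖p (x, ξ₁) - q (x, ξ₁)‖ + ‖q (x, ξ₁) - q (x, ξ₂)‖ + ‖q (x, ξ₂) - p (x, ξ₂)‖ := by
          exact le_trans (norm_add_le _ _) (by gcongr; exact norm_add_le _ _)
      _ < ε / 3 + 0 + ε / 3 := by
          have h3 : ‖q (x, ξ₁) - q (x, ξ₂)‖ = 0 := by
            rw [hKq x hx ξ₁ ξ₂, sub_self, norm_zero]
          rw [h3]; linarith
      _ < ε := by linarith
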